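/- Let ℓ ≥ 3 be an integer and let ζ be a primitive 2^ℓ-th root of unity in a fixed algebraic closure of F (so that ζ² is a primitive 2^{ℓ−1}-th root of unity). Then the minimal polynomial of ζ + ζ^{−1} over F equals g(t)² − 2, where g(t) is the minimal polynomial of ζ² + ζ^{−2} over F. Moreover, if ζ₄ is a primitive 4th root of unity in the algebraic closure of F, then the minimal polynomial of ζ₄ + ζ₄^{−1} over F is t. -/

import Mathlib

open Polynomial

instance : Fact (Nat.Prime 2) := ⟨Nat.prime_two⟩

/-- The iterates of `X ^ 2 - 2` under composition, over `ℤ`. -/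
noncomputable def Hpoly : ℕ → Polynomial ℤ
  | 0 => X
  | n + 1 => (Hpoly n) ^ 2 - 2

lemma two_eq_C_two {R : Type*} [CommRing R] : (2 : R[X]) = C 2 :=
  (map_ofNat C 2).symm

lemma Hpoly_monic (n : ℕ) : (Hpoly n).Monic ∧ (Hpoly n).natDegree = 2 ^ n := by
  induction n with
  | zero => exact ⟨monic_X, by simp [Hpoly]⟩
  | succ n ih =>
    obtain ⟨hm, hd⟩ := ih
    have hmp : ((Hpoly n) ^ 2).Monic := hm.pow 2
    have hdp : ((Hpoly n) ^ 2).natDegree = 2 ^ (n + 1) := by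
      rw [natDegree_pow, hd]; ring
    have hpos : 0 < ((Hpoly n) ^ 2).natDegree := by
      rw [hdp]; positivity
    have hlt : degree (2 : ℤ[X]) < degree ((Hpoly n) ^ 2) := by
      calc degree (2 : ℤ[X]) ≤ 0 := by rw [two_eq_C_two]; exact degree_C_le
        _ < degree ((Hpoly n) ^ 2) := natDegree_pos_iff_degree_pos.mp hpos
    constructor
    · rw [Hpoly]; exact hmp.sub_of_left hlt
    · rw [Hpoly, two_eq_C_two, natDegree_sub_C, hdp]

lemma Hpoly_eval_zero (n : ℕ) (hn : 1 ≤ n) :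
    (Hpoly n).eval 0 = -2 ∨ (Hpoly n).eval 0 = 2 := by
  induction n with
  | zero => omega
  | succ n ih =>
    have key : (Hpoly (n + 1)).eval 0 = ((Hpoly n).eval 0) ^ 2 - 2 := by simp [Hpoly]
    rcases Nat.eq_zero_or_pos n with h0 | hpos
    · left; subst h0; rw [key]; simp [Hpoly]
    · rcases ih hpos with h2 | h2 <;> (right; rw [key, h2]; norm_num)

lemma Hpoly_map_zmod (n : ℕ) :
    (Hpoly n).map (Int.castRingHom (ZMod 2)) = X ^ (2 ^ n) := by
  induction n with
  | zero => simp [Hpoly]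
  | succ n ih =>
    have h2 : (2 : (ZMod 2)[X]) = 0 := by
      rw [two_eq_C_two, show (2 : ZMod 2) = 0 from rfl, map_zero]
    rw [Hpoly, Polynomial.map_sub, Polynomial.map_pow, ih, Polynomial.map_ofNat, h2,
      sub_zero, ← pow_mul, pow_succ]

lemma Hpoly_coeff_dvd (n : ℕ) {i : ℕ} (hi : i < 2 ^ n) : (2 : ℤ) ∣ (Hpoly n).coeff i := by
  have h := Hpoly_map_zmod n
  have : ((Hpoly n).map (Int.castRingHom (ZMod 2))).coeff i = 0 := by
    rw [h, coeff_X_pow, if_neg (by omega)]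
  rw [coeff_map] at this
  have h2 : ((Hpoly n).coeff i : ZMod 2) = 0 := this
  exact_mod_cast (ZMod.intCast_zmod_eq_zero_iff_dvd _ 2).mp h2

section Witt

variable {k : Type*} [Field k] [IsAlgClosed k] [CharP k 2]

local notation "W" => WittVector 2 k
local notation "F" => FractionRing (WittVector 2 k)
local notation "Ω" => AlgebraicClosure (FractionRing (WittVector 2 k))

lemma two_irreducible_witt : Irreducible (2 : W) := by
  have := WittVector.irreducible (p := 2) (k := k)
  rwa [Nat.cast_ofNat (R := WittVector 2 k) (n := 2)] at this

lemma Hpoly_irreducible_witt (n : ℕ) (hn : 1 ≤ n) :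
    Irreducible ((Hpoly n).map (algebraMap ℤ W)) := by
  haveI : IsDiscreteValuationRing W := WittVector.isDiscreteValuationRing
  have h2 : Irreducible (2 : W) := two_irreducible_witt
  set f : W[X] := (Hpoly n).map (algebraMap ℤ W) with hf
  have hmonic : f.Monic := (Hpoly_monic n).1.map _
  have hdeg : f.natDegree = 2 ^ n := by
    rw [hf, (Hpoly_monic n).1.natDegree_map]
    exact (Hpoly_monic n).2
  set P : Ideal W := Ideal.span {(2 : W)} with hP
  have h2p : Prime (2 : W) := (irreducible_iff_prime).mp h2
  have hPprime : P.IsPrime :=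
    (Ideal.span_singleton_prime h2.ne_zero).mpr h2p
  apply Polynomial.irreducible_of_eisenstein_criterion hPprime
  · rw [hmonic.leadingCoeff]
    intro h
    exact hPprime.ne_top ((Ideal.eq_top_iff_one P).mpr h)
  · intro i hi
    have hi' : i < 2 ^ n := by
      rw [degree_eq_natDegree hmonic.ne_zero, hdeg] at hi
      exact_mod_cast hi
    obtain ⟨c, hc⟩ := Hpoly_coeff_dvd n hi'
    rw [hf, coeff_map, hc, Ideal.mem_span_singleton]
    exact ⟨algebraMap ℤ W c, by rw [map_mul, map_ofNat]⟩
  · rw [degree_eq_natDegree hmonic.ne_zero, hdeg]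
    exact_mod_cast Nat.pos_of_ne_zero (by positivity)
  · have hc0 : (Hpoly n).coeff 0 = -2 ∨ (Hpoly n).coeff 0 = 2 := by
      rw [coeff_zero_eq_eval_zero]; exact Hpoly_eval_zero n hn
    have hsq : P ^ 2 = Ideal.span {(2 : W) ^ 2} := by
      rw [hP, Ideal.span_singleton_pow]
    intro hmem
    rw [hf, coeff_map, hsq, Ideal.mem_span_singleton] at hmem
    have hdvd2 : (2 : W) ^ 2 ∣ (2 : W) := by
      rcases hc0 with h | h <;> rw [h] at hmem <;> push_cast at hmem
      · exact (dvd_neg.mp hmem)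
      · exact hmem
    obtain ⟨c, hc⟩ := hdvd2
    have h1 : (2 : W) * 1 = 2 * (2 * c) := by linear_combination hc
    have : (1 : W) = 2 * c := mul_left_cancel₀ h2.ne_zero h1
    exact h2.not_isUnit (IsUnit.of_mul_eq_one _ this.symm)
  · exact hmonic.isPrimitive

noncomputable instance : Algebra W F := inferInstance

lemma Hpoly_irreducible_frac (n : ℕ) (hn : 1 ≤ n) :
    Irreducible ((Hpoly n).map (algebraMap ℤ F)) := by
  haveI : IsDiscreteValuationRing W := WittVector.isDiscreteValuationRing
  have h := Hpoly_irreducible_witt (k := k) n hn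
  have hmonic : ((Hpoly n).map (algebraMap ℤ W)).Monic := (Hpoly_monic n).1.map _
  have := (hmonic.irreducible_iff_irreducible_map_fraction_map (K := F)).mp h
  rwa [Polynomial.map_map, ← IsScalarTower.algebraMap_eq] at this

lemma aeval_Hpoly (ζ : Ω) (hζ : ζ ≠ 0) (n : ℕ) :
    aeval (ζ + ζ⁻¹) (Hpoly n) = ζ ^ (2 ^ n) + (ζ ^ (2 ^ n))⁻¹ := by
  induction n with
  | zero => simp [Hpoly]
  | succ n ih =>
    have hne : ζ ^ (2 ^ n) ≠ 0 := pow_ne_zero _ hζ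
    have key : (ζ ^ 2 ^ n + (ζ ^ 2 ^ n)⁻¹) ^ 2 - 2
        = ζ ^ 2 ^ (n + 1) + (ζ ^ 2 ^ (n + 1))⁻¹ := by
      have h1 : ζ ^ 2 ^ (n + 1) = (ζ ^ 2 ^ n) ^ 2 := by rw [← pow_mul, pow_succ]
      rw [h1]
      field_simp
      ring
    rw [Hpoly, map_sub, map_pow, ih, map_ofNat, key]

lemma prim_four_add_inv (ω : Ω) (h : IsPrimitiveRoot ω 4) : ω + ω⁻¹ = 0 := by
  have h2 : IsPrimitiveRoot (ω ^ 2) 2 := h.pow (by norm_num) (by norm_num)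
  have hsq : ω ^ 2 = -1 := h2.eq_neg_one_of_two_right
  have hω : ω ≠ 0 := by
    intro h0
    rw [h0] at hsq
    norm_num at hsq
  have hinv : ω⁻¹ = -ω := by
    field_simp
    linear_combination hsq
  rw [hinv]; ring

lemma minpoly_eq_Hpoly (n : ℕ) (ζ : Ω) (hζ : IsPrimitiveRoot ζ (2 ^ (n + 2))) :
    minpoly F (ζ + ζ⁻¹) = (Hpoly n).map (algebraMap ℤ F) := by
  have hζ0 : ζ ≠ 0 := by
    intro h0
    have := hζ.pow_eq_one
    rw [h0] at this
    simp at this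
  have hprim4 : IsPrimitiveRoot (ζ ^ (2 ^ n)) 4 :=
    hζ.pow (by positivity) (by rw [pow_add]; norm_num)
  have hroot : aeval (ζ + ζ⁻¹) ((Hpoly n).map (algebraMap ℤ F)) = 0 := by
    rw [aeval_map_algebraMap, aeval_Hpoly ζ hζ0 n]
    exact prim_four_add_inv _ hprim4
  rcases Nat.eq_zero_or_pos n with h0 | hpos
  · subst h0
    have : ζ + ζ⁻¹ = 0 := prim_four_add_inv ζ (by
      have : (2 : ℕ) ^ (0 + 2) = 4 := by norm_num
      rwa [this] at hζ)
    rw [this, minpoly.zero]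
    simp [Hpoly]
  · exact (minpoly.eq_of_irreducible_of_monic
      (Hpoly_irreducible_frac n hpos) hroot ((Hpoly_monic n).1.map _)).symm

end Witt

/-- Let `k` be an algebraically closed field of characteristic `2`, `W = W(k)`,
and `F` the fraction field of `W`. For `ℓ ≥ 3` and a primitive `2^ℓ`-th root of unity `ζ` in an
algebraic closure of `F`, the minimal polynomial of `ζ + ζ⁻¹` over `F` equals `g(t)² − 2` where
`g` is the minimal polynomial of `ζ² + ζ⁻²` over `F`; and for a primitive `4`-th root of unity
`ζ₄`, the minimal polynomial of `ζ₄ + ζ₄⁻¹` over `F` is `t`. -/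
theorem minpoly_two_pow_root_of_unity
    {k : Type*} [Field k] [IsAlgClosed k] [CharP k 2] :
    (∀ (ℓ : ℕ), 3 ≤ ℓ →
      ∀ ζ : AlgebraicClosure (FractionRing (WittVector 2 k)),
        IsPrimitiveRoot ζ (2 ^ ℓ) →
          minpoly (FractionRing (WittVector 2 k)) (ζ + ζ⁻¹) =
            (minpoly (FractionRing (WittVector 2 k)) (ζ ^ 2 + (ζ ^ 2)⁻¹)) ^ 2 - 2) ∧
    (∀ ζ₄ : AlgebraicClosure (FractionRing (WittVector 2 k)),
      IsPrimitiveRoot ζ₄ 4 →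
        minpoly (FractionRing (WittVector 2 k)) (ζ₄ + ζ₄⁻¹) = Polynomial.X) := by
  constructor
  · intro ℓ hℓ ζ hζ
    obtain ⟨n, rfl⟩ : ∃ n, ℓ = (n + 1) + 2 := ⟨ℓ - 3, by omega⟩
    have hζ2 : IsPrimitiveRoot (ζ ^ 2) (2 ^ (n + 2)) :=
      hζ.pow (by positivity) (by rw [pow_succ]; ring)
    rw [minpoly_eq_Hpoly (n + 1) ζ hζ, minpoly_eq_Hpoly n (ζ ^ 2) hζ2]
    rw [Hpoly, Polynomial.map_sub, Polynomial.map_pow, Polynomial.map_ofNat]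
  · intro ζ₄ hζ₄
    have h : IsPrimitiveRoot ζ₄ (2 ^ (0 + 2)) := by norm_num; exact hζ₄
    rw [minpoly_eq_Hpoly 0 ζ₄ h]
    simp [Hpoly]
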